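/- Let χ and χ' be integers with χ ≤ −2 and χ' ≤ 2χ, and write −χ' = a·(−χ) + b with integers a, b satisfying 0 ≤ b < −χ (so a ≥ 2). Then the least natural number k for which there exists an integer d ≥ 1 with d(χ−k) ≤ χ'−k and dχ ≥ χ'+k (equivalently, (χ'−k)/(χ−k) ≤ d ≤ (χ'+k)/χ as rational numbers) is k = ⌈b/(a−1)⌉. -/
import Mathlib


noncomputable section

/-- Let χ and χ' be integers with χ ≤ −2 and χ' ≤ 2χ, and write
−χ' = a·(−χ) + b with integers a, b satisfying 0 ≤ b < −χ (so a ≥ 2).  Then the least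
natural number k for which there exists an integer d ≥ 1 with d(χ−k) ≤ χ'−k and dχ ≥ χ'+k
(equivalently, (χ'−k)/(χ−k) ≤ d ≤ (χ'+k)/χ as rational numbers) is k = ⌈b/(a−1)⌉. -/
theorem least_k_eq_ceil (χ χ' a b : ℤ) (hχ : χ ≤ -2) (hχ' : χ' ≤ 2 * χ)
    (hab : -χ' = a * (-χ) + b) (hb0 : 0 ≤ b) (hb1 : b < -χ) :
    IsLeast {k : ℕ | ∃ d : ℤ, 1 ≤ d ∧ d * (χ - (k : ℤ)) ≤ χ' - (k : ℤ) ∧ χ' + (k : ℤ) ≤ d * χ}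
      (⌈(b : ℚ) / ((a : ℚ) - 1)⌉.toNat) := by
  have hχ'' : χ' = a * χ - b := by linarith
  have ha : 2 ≤ a := by
    by_contra h
    push_neg at h
    nlinarith [mul_nonneg (by linarith : (0:ℤ) ≤ 1 - a) (by linarith : (0:ℤ) ≤ -χ)]
  have h2a : (2:ℚ) ≤ (a:ℚ) := by exact_mod_cast ha
  have hapos : (0:ℚ) < (a:ℚ) - 1 := by
    have : (2:ℚ) ≤ (a:ℚ) := by exact_mod_cast ha
    linarith
  set k₀ : ℤ := ⌈(b : ℚ) / ((a : ℚ) - 1)⌉ with hk₀def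
  -- characterization: k₀ ≤ k ↔ b ≤ (a-1)*k
  have key : ∀ k : ℤ, k₀ ≤ k ↔ b ≤ (a - 1) * k := by
    intro k
    rw [hk₀def, Int.ceil_le, div_le_iff₀ hapos]
    constructor
    · intro h
      have h2 : (b:ℚ) ≤ (((a - 1) * k : ℤ) : ℚ) := by push_cast; linarith
      exact_mod_cast h2
    · intro h
      have : (b:ℚ) ≤ ((a:ℚ) - 1) * (k:ℚ) := by exact_mod_cast h
      linarith
  have hk₀nonneg : 0 ≤ k₀ := by
    rw [hk₀def]
    apply Int.ceil_nonneg
    positivity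
  have hcast : ((k₀.toNat : ℤ)) = k₀ := Int.toNat_of_nonneg hk₀nonneg
  constructor
  · -- membership with d = a
    refine ⟨a, by linarith, ?_, ?_⟩
    · have h1 : b ≤ (a - 1) * k₀ := (key k₀).1 le_rfl
      rw [hcast] at *
      nlinarith [h1]
    · -- need k₀ ≤ b
      have h2 : k₀ ≤ b := by
        rw [hk₀def, Int.ceil_le, div_le_iff₀ hapos]
        have hb0' : (0:ℚ) ≤ (b:ℚ) := by exact_mod_cast hb0
        nlinarith [mul_nonneg hb0' (by linarith [h2a] : (0:ℚ) ≤ (a:ℚ) - 2)]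
      rw [hcast]
      linarith
  · intro k hk
    obtain ⟨d, hd1, hd2, hd3⟩ := hk
    have hkn : (0:ℤ) ≤ (k:ℤ) := Int.ofNat_nonneg k
    -- d ≤ a
    have hda : d ≤ a := by nlinarith [hd3]
    have hbk : b ≤ (a - 1) * (k:ℤ) := by
      nlinarith [mul_nonneg (by linarith : (0:ℤ) ≤ a - d) (by linarith : (0:ℤ) ≤ -χ),
        mul_le_mul_of_nonneg_right (by linarith : d - 1 ≤ a - 1) hkn]
    have : k₀ ≤ (k:ℤ) := (key _).2 hbk
    omega
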